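/- Let A, B be arbitrary n × n matrices over a field K (K = ℝ or ℂ). Then det(A + B) = Σ_{k=0}^{n} tr(adj_k(A) · C_k(B)). -/

import Mathlib

open Matrix

variable {K : Type*}

/-- The `k`-th compound matrix of an `m × n` matrix `A`: it is indexed by the
`k`-element subsets of the row/column index sets (which correspond to `Fin (choose _ k)`
via the lexicographic order), and its `(S, T)` entry is the `k × k` minor of `A`
on rows `S` and columns `T`. -/
def compound [CommRing K] {m n : ℕ} (k : ℕ) (A : Matrix (Fin m) (Fin n) K) :
    Matrix {s : Finset (Fin m) // s.card = k} {t : Finset (Fin n) // t.card = k} K :=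
  fun S T => (A.submatrix (S.1.orderEmbOfFin S.2) (T.1.orderEmbOfFin T.2)).det

/-- The `k`-th adjugate of an `n × n` matrix `A` (generalizing the classical adjugate,
which is the case `k = 1`): its `(S, T)` entry is `(-1) ^ (Σ S + Σ T)` times the
`(n-k) × (n-k)` minor of `A` obtained by deleting the rows indexed by `T` and the
columns indexed by `S`.  (The sums `Σ S`, `Σ T` are taken with 1-based indexing in the
classical formula; with 0-based indexing the parity is unchanged.) -/
def adjCompound [CommRing K] {n : ℕ} (k : ℕ) (A : Matrix (Fin n) (Fin n) K) :
    Matrix {s : Finset (Fin n) // s.card = k} {t : Finset (Fin n) // t.card = k} K :=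
  fun S T =>
    (-1 : K) ^ ((∑ i ∈ S.1, (i : ℕ)) + (∑ j ∈ T.1, (j : ℕ))) *
      (A.submatrix
        ((T.1ᶜ).orderEmbOfFin (show (T.1ᶜ).card = n - k by
          simp [Finset.card_compl, T.2]))
        ((S.1ᶜ).orderEmbOfFin (show (S.1ᶜ).card = n - k by
          simp [Finset.card_compl, S.2]))).det

/-- The Plücker coordinates of `x₁ ∧ ⋯ ∧ x_k ∈ ℂ^(choose n k)`: the coordinate at the
`k`-element subset `S` is the `k × k` minor of the `n × k` matrix `[x₁ ⋯ x_k]` on rows `S`. -/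
def wedgeVec [CommRing K] {n k : ℕ} (x : Fin k → Fin n → K) :
    {s : Finset (Fin n) // s.card = k} → K :=
  fun S => (Matrix.of fun (i j : Fin k) => x j (S.1.orderEmbOfFin S.2 i)).det

/-- The characteristic polynomial `P(t) = det (A - t I)`. -/
noncomputable def detPoly [CommRing K] {n : ℕ} (A : Matrix (Fin n) (Fin n) K) : Polynomial K :=
  ((Matrix.of fun i j => Polynomial.C (A i j)) - (Polynomial.X : Polynomial K) • 1).det

section DetAddProof

open Matrix Finset Equiv

namespace DetAddAux

variable {n : ℕ}

lemma card_filter_lt (y : Fin n) : #(Finset.univ.filter (fun x => x < y)) = (y : ℕ) := by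
  rw [show Finset.univ.filter (fun x => x < y) = Finset.Iio y by ext x; simp]
  simp

lemma mem_iff_exists (s : Finset (Fin n)) {k : ℕ} (h : s.card = k) (y : Fin n) :
    y ∈ s ↔ ∃ a, s.orderEmbOfFin h a = y := by
  constructor
  · intro hy
    have : y ∈ Set.range (s.orderEmbOfFin h) := by
      rw [Finset.range_orderEmbOfFin]; exact hy
    obtain ⟨a, ha⟩ := this; exact ⟨a, ha⟩
  · rintro ⟨a, rfl⟩; exact Finset.orderEmbOfFin_mem s h a

lemma rank_orderEmbOfFin (s : Finset (Fin n)) {k : ℕ} (h : s.card = k) (i : Fin k) :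
    #(s.filter (fun x => x < s.orderEmbOfFin h i)) = (i : ℕ) := by
  have himg : s.filter (fun x => x < s.orderEmbOfFin h i)
      = (Finset.Iio i).image (s.orderEmbOfFin h) := by
    ext x
    simp only [Finset.mem_filter, Finset.mem_image, Finset.mem_Iio]
    constructor
    · rintro ⟨hx, hlt⟩
      obtain ⟨a, rfl⟩ := (mem_iff_exists s h x).1 hx
      exact ⟨a, (OrderEmbedding.lt_iff_lt _).1 hlt, rfl⟩
    · rintro ⟨a, ha, rfl⟩
      exact ⟨Finset.orderEmbOfFin_mem s h a, (OrderEmbedding.lt_iff_lt _).2 ha⟩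
  rw [himg, Finset.card_image_of_injective _ (s.orderEmbOfFin h).injective]
  simp

lemma orderEmbOfFin_eq_iff (s : Finset (Fin n)) {k : ℕ} (h : s.card = k) (i : Fin k)
    (y : Fin n) :
    s.orderEmbOfFin h i = y ↔ y ∈ s ∧ #(s.filter (fun x => x < y)) = (i : ℕ) := by
  constructor
  · rintro rfl
    exact ⟨Finset.orderEmbOfFin_mem s h i, rank_orderEmbOfFin s h i⟩
  · rintro ⟨hy, hr⟩
    obtain ⟨a, rfl⟩ := (mem_iff_exists s h y).1 hy
    have := rank_orderEmbOfFin s h a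
    congr 1
    apply Fin.ext
    omega

lemma oe_initial (s : Finset (Fin n)) {k' : ℕ} (h : s.card = k') (i : Fin k') (z : Fin n)
    (hz : (z : ℕ) = (i : ℕ)) (hsub : ∀ x : Fin n, x ≤ z → x ∈ s) :
    s.orderEmbOfFin h i = z := by
  rw [orderEmbOfFin_eq_iff]
  refine ⟨hsub z le_rfl, ?_⟩
  rw [show s.filter (fun x => x < z) = Finset.univ.filter (fun x => x < z) by
    ext x; simp only [Finset.mem_filter, Finset.mem_univ, true_and, and_iff_right_iff_imp]
    exact fun hx => hsub x hx.le]
  rw [card_filter_lt]; exact hz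

lemma strictMono_nat_le {m : ℕ} {f : Fin m → ℕ} (hf : StrictMono f) (h0 : 0 < m) :
    ∀ j (hj : j < m), f ⟨0, h0⟩ + j ≤ f ⟨j, hj⟩ := by
  intro j
  induction j with
  | zero => intro hj; simp
  | succ j ih =>
    intro hj
    have h1 := ih (by omega)
    have h2 : f ⟨j, by omega⟩ < f ⟨j+1, hj⟩ := hf (by simp [Fin.lt_def])
    omega

lemma card_compl_eq (T : Finset (Fin n)) {k : ℕ} (hT : T.card = k) : Tᶜ.card = n - k := by
  simp [Finset.card_compl, hT]

lemma card_le (T : Finset (Fin n)) {k : ℕ} (hT : T.card = k) : k ≤ n := by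
  have := T.card_le_univ
  rw [Fintype.card_fin] at this
  omega

/-- the function underlying `permT` -/
def embT (T : Finset (Fin n)) {k : ℕ} (hT : T.card = k) : Fin n → Fin n := fun j =>
  if h : (j : ℕ) < k then T.orderEmbOfFin hT ⟨j, h⟩
  else Tᶜ.orderEmbOfFin (card_compl_eq T hT) ⟨(j : ℕ) - k, by omega⟩

lemma embT_injective (T : Finset (Fin n)) {k : ℕ} (hT : T.card = k) :
    Function.Injective (embT T hT) := by
  intro j j' heq
  unfold embT at heq
  split_ifs at heq with h1 h2 h2
  · have := (T.orderEmbOfFin hT).injective heq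
    apply Fin.ext; simpa [Fin.ext_iff] using this
  · have ha : T.orderEmbOfFin hT ⟨j, h1⟩ ∈ T := Finset.orderEmbOfFin_mem T hT _
    have hb : Tᶜ.orderEmbOfFin (card_compl_eq T hT) ⟨(j' : ℕ) - k, by omega⟩ ∈ Tᶜ :=
      Finset.orderEmbOfFin_mem _ _ _
    rw [heq] at ha
    rw [Finset.mem_compl] at hb
    exact absurd ha hb
  · have ha : T.orderEmbOfFin hT ⟨j', h2⟩ ∈ T := Finset.orderEmbOfFin_mem T hT _
    have hb : Tᶜ.orderEmbOfFin (card_compl_eq T hT) ⟨(j : ℕ) - k, by omega⟩ ∈ Tᶜ :=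
      Finset.orderEmbOfFin_mem _ _ _
    rw [← heq] at ha
    rw [Finset.mem_compl] at hb
    exact absurd ha hb
  · have := (Tᶜ.orderEmbOfFin (card_compl_eq T hT)).injective heq
    have := Fin.ext_iff.1 this
    simp only at this
    apply Fin.ext; omega

/-- The permutation of `Fin n` sending `0,…,k-1` to the elements of `T` in increasing order
and `k,…,n-1` to the elements of `Tᶜ` in increasing order. -/
noncomputable def permT (T : Finset (Fin n)) {k : ℕ} (hT : T.card = k) : Equiv.Perm (Fin n) :=
  Equiv.ofBijective (embT T hT) (Finite.injective_iff_bijective.mp (embT_injective T hT))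

lemma permT_apply_lt (T : Finset (Fin n)) {k : ℕ} (hT : T.card = k) (j : Fin n)
    (h : (j : ℕ) < k) : permT T hT j = T.orderEmbOfFin hT ⟨j, h⟩ := by
  simp [permT, Equiv.ofBijective_apply, embT, h]

lemma permT_apply_ge (T : Finset (Fin n)) {k : ℕ} (hT : T.card = k) (j : Fin n)
    (h : ¬ (j : ℕ) < k) :
    permT T hT j = Tᶜ.orderEmbOfFin (card_compl_eq T hT) ⟨(j : ℕ) - k, by omega⟩ := by
  simp [permT, Equiv.ofBijective_apply, embT, h]

lemma sign_permT (T : Finset (Fin n)) {k : ℕ} (hT : T.card = k) :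
    Equiv.Perm.sign (permT T hT) =
      (-1) ^ ((∑ i ∈ T, (i : ℕ)) + ∑ j ∈ Finset.range k, j) := by
  induction k generalizing T with
  | zero =>
    have hTe : T = ∅ := Finset.card_eq_zero.mp hT
    have : permT T hT = Equiv.refl (Fin n) := by
      apply Equiv.ext
      intro j
      rw [permT_apply_ge T hT j (by omega)]
      apply oe_initial
      · simp
      · intro x _
        simp [hTe]
    rw [this]
    simp [hTe]
  | succ k IH =>
    have hne : T.Nonempty := Finset.card_pos.mp (by omega)
    rcases n with - | n₀
    · obtain ⟨x, -⟩ := hne; exact x.elim0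
    set t0 : Fin (n₀+1) := T.min' hne with ht0def
    have ht0T : t0 ∈ T := T.min'_mem hne
    set T' : Finset (Fin (n₀+1)) := T.erase t0 with hT'def
    have hT' : T'.card = k := by
      rw [hT'def, Finset.card_erase_of_mem ht0T, hT]
      omega
    have ht0lt : ∀ x ∈ T', t0 < x := fun x hx =>
      lt_of_le_of_ne (T.min'_le x (Finset.mem_of_mem_erase hx))
        (Ne.symm (Finset.ne_of_mem_erase hx))
    have hlow : ∀ x : Fin (n₀+1), x < t0 → x ∈ Tᶜ := by
      intro x hx
      rw [Finset.mem_compl]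
      intro hxT
      exact absurd (T.min'_le x hxT) (not_le.mpr hx)
    have hbound : (t0 : ℕ) + k < n₀ + 1 := by
      have hsm : StrictMono (fun a : Fin (k+1) => ((T.orderEmbOfFin hT a : Fin (n₀+1)) : ℕ)) :=
        fun a b hab => (T.orderEmbOfFin hT).strictMono hab
      have h1 := strictMono_nat_le hsm (by omega) k (by omega)
      have h2 : T.orderEmbOfFin hT ⟨0, by omega⟩ = t0 := Finset.orderEmbOfFin_zero hT (by omega)
      have h3 : ((T.orderEmbOfFin hT ⟨k, by omega⟩ : Fin (n₀+1)) : ℕ) < n₀ + 1 :=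
        (T.orderEmbOfFin hT ⟨k, by omega⟩).isLt
      rw [h2] at h1
      omega
    set m : Fin (n₀+1) := ⟨(t0 : ℕ) + k, hbound⟩ with hmdef
    have hmval : (m : ℕ) = (t0 : ℕ) + k := rfl
    have key : permT T' hT' = permT T hT * Fin.cycleRange m := by
      apply Equiv.ext
      intro j
      rw [Equiv.Perm.mul_apply]
      rcases lt_trichotomy j m with hj | hj | hj
      · -- j < m
        have hcr : ((Fin.cycleRange m j : Fin (n₀+1)) : ℕ) = (j : ℕ) + 1 :=
          Fin.coe_cycleRange_of_lt hj
        have hjm : (j : ℕ) < (t0 : ℕ) + k := hj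
        by_cases hjk : (j : ℕ) < k
        · rw [permT_apply_lt T' hT' j hjk,
            permT_apply_lt T hT _ (show ((Fin.cycleRange m j : Fin (n₀+1)) : ℕ) < k + 1 by omega)]
          symm
          rw [orderEmbOfFin_eq_iff]
          refine ⟨Finset.mem_of_mem_erase (Finset.orderEmbOfFin_mem T' hT' _), ?_⟩
          have hmem' : T'.orderEmbOfFin hT' ⟨j, hjk⟩ ∈ T' :=
            Finset.orderEmbOfFin_mem T' hT' _
          have ht0y : t0 < T'.orderEmbOfFin hT' ⟨j, hjk⟩ := ht0lt _ hmem'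
          have hfilt : T.filter (fun x => x < T'.orderEmbOfFin hT' ⟨j, hjk⟩)
              = insert t0 (T'.filter (fun x => x < T'.orderEmbOfFin hT' ⟨j, hjk⟩)) := by
            ext x
            simp only [Finset.mem_filter, Finset.mem_insert, hT'def, Finset.mem_erase]
            constructor
            · rintro ⟨hxT, hxy⟩
              by_cases hx : x = t0
              · exact Or.inl hx
              · exact Or.inr ⟨⟨hx, hxT⟩, hxy⟩
            · rintro (rfl | ⟨⟨-, hxT⟩, hxy⟩)
              · exact ⟨ht0T, ht0y⟩
              · exact ⟨hxT, hxy⟩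
          rw [hfilt,
            Finset.card_insert_of_notMem (by
              simp only [Finset.mem_filter]
              rintro ⟨h1, -⟩
              exact absurd rfl (Finset.ne_of_mem_erase h1)),
            rank_orderEmbOfFin T' hT' ⟨j, hjk⟩]
          simp [hcr]
        · rw [permT_apply_ge T' hT' j hjk,
            permT_apply_ge T hT _ (show ¬ ((Fin.cycleRange m j : Fin (n₀+1)) : ℕ) < k + 1 by omega)]
          have hzlt : (j : ℕ) - k < n₀ + 1 := by omega
          have hzt0 : (j : ℕ) - k < (t0 : ℕ) := by omega
          refine (oe_initial T'ᶜ (card_compl_eq T' hT') _ ⟨(j:ℕ) - k, hzlt⟩ (by simp) ?_).trans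
            (oe_initial Tᶜ (card_compl_eq T hT) _ ⟨(j:ℕ) - k, hzlt⟩ (by simp [hcr]) ?_).symm
          · intro x hx
            rw [hT'def, Finset.compl_erase]
            refine Finset.mem_insert_of_mem (hlow x ?_)
            rw [Fin.lt_def]
            have : (x : ℕ) ≤ (j : ℕ) - k := hx
            omega
          · intro x hx
            refine hlow x ?_
            rw [Fin.lt_def]
            have : (x : ℕ) ≤ (j : ℕ) - k := hx
            omega
      · -- j = m
        rw [hj, Fin.cycleRange_self]
        rw [permT_apply_ge T' hT' m (by omega),
          permT_apply_lt T hT 0 (by simp)]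
        have h2 : T.orderEmbOfFin hT ⟨((0 : Fin (n₀+1)) : ℕ), by simp⟩ = t0 := by
          rw [orderEmbOfFin_eq_iff]
          refine ⟨ht0T, ?_⟩
          rw [Finset.filter_eq_empty_iff.mpr ?_]
          · simp
          · intro x hx
            exact not_lt.mpr (T.min'_le x hx)
        rw [h2]
        apply oe_initial
        · show (t0 : ℕ) = (m : ℕ) - k
          omega
        · intro x hx
          rw [hT'def, Finset.compl_erase]
          rcases eq_or_lt_of_le hx with h | h
          · rw [h]; exact Finset.mem_insert_self _ _
          · exact Finset.mem_insert_of_mem (hlow x h)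
      · -- j > m
        rw [Fin.cycleRange_of_gt hj]
        have hjm : (t0 : ℕ) + k < (j : ℕ) := hj
        rw [permT_apply_ge T' hT' j (by omega), permT_apply_ge T hT j (by omega)]
        set y := Tᶜ.orderEmbOfFin (card_compl_eq T hT) ⟨(j:ℕ) - (k+1), by omega⟩ with hydef
        have hyc : y ∈ Tᶜ := Finset.orderEmbOfFin_mem _ _ _
        have hrank : #(Tᶜ.filter (fun x => x < y)) = (j : ℕ) - (k+1) :=
          rank_orderEmbOfFin Tᶜ (card_compl_eq T hT) _
        have ht0y : t0 < y := by
          by_contra hcon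
          push_neg at hcon
          have hyt0 : y < t0 := lt_of_le_of_ne hcon (by
            intro h; rw [h] at hyc; exact (Finset.mem_compl.mp hyc) ht0T)
          have hsub : Tᶜ.filter (fun x => x < y) ⊆ Finset.univ.filter (fun x => x < y) := by
            intro x hx; simp only [Finset.mem_filter] at hx ⊢; exact ⟨Finset.mem_univ _, hx.2⟩
          have hle := Finset.card_le_card hsub
          rw [hrank, card_filter_lt] at hle
          have h5 : (y : ℕ) < (t0 : ℕ) := hyt0
          omega
        rw [orderEmbOfFin_eq_iff]
        constructor
        · rw [hT'def, Finset.compl_erase]; exact Finset.mem_insert_of_mem hyc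
        · have hfilt : T'ᶜ.filter (fun x => x < y) = insert t0 (Tᶜ.filter (fun x => x < y)) := by
            ext x
            simp only [Finset.mem_filter, Finset.mem_insert, hT'def, Finset.compl_erase,
              Finset.mem_insert]
            constructor
            · rintro ⟨hx1 | hx1, hxy⟩
              · exact Or.inl hx1
              · exact Or.inr ⟨hx1, hxy⟩
            · rintro (rfl | ⟨hx1, hxy⟩)
              · exact ⟨Or.inl rfl, ht0y⟩
              · exact ⟨Or.inr hx1, hxy⟩
          rw [hfilt,
            Finset.card_insert_of_notMem (by
              simp only [Finset.mem_filter]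
              rintro ⟨h1, -⟩
              exact (Finset.mem_compl.mp h1) ht0T), hrank]
          simp
          omega
    have hsigns := congrArg Equiv.Perm.sign key
    rw [IH T' hT', _root_.map_mul, Fin.sign_cycleRange] at hsigns
    have hsq : ((-1 : ℤˣ) ^ ((m : ℕ))) * ((-1) ^ ((m : ℕ))) = 1 := by
      rw [← pow_add]; exact Even.neg_one_pow ⟨(m : ℕ), by ring⟩
    have hfin : Equiv.Perm.sign (permT T hT)
        = (-1) ^ ((∑ i ∈ T', (i : ℕ)) + ∑ j ∈ Finset.range k, j) * (-1) ^ ((m : ℕ)) := by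
      calc Equiv.Perm.sign (permT T hT)
          = Equiv.Perm.sign (permT T hT) * (((-1 : ℤˣ) ^ ((m : ℕ))) * ((-1) ^ ((m : ℕ)))) := by
            rw [hsq, mul_one]
        _ = (Equiv.Perm.sign (permT T hT) * ((-1 : ℤˣ) ^ ((m : ℕ)))) * ((-1) ^ ((m : ℕ))) :=
            (mul_assoc _ _ _).symm
        _ = (-1) ^ ((∑ i ∈ T', (i : ℕ)) + ∑ j ∈ Finset.range k, j) * (-1) ^ ((m : ℕ)) := by
            rw [← hsigns]
    rw [hfin, ← pow_add]
    congr 1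
    have hsumT : (∑ i ∈ T, (i : ℕ)) = (t0 : ℕ) + ∑ i ∈ T', (i : ℕ) :=
      (Finset.add_sum_erase T (fun i => (i : ℕ)) ht0T).symm
    rw [Finset.sum_range_succ, hsumT, hmval]
    ring

end DetAddAux
section Part3
open Matrix Finset Equiv
namespace DetAddAux
variable {n k : ℕ}

/-- the canonical equivalence `Fin k ⊕ Fin (n-k) ≃ Fin n` -/
def sumEquiv (hkn : k ≤ n) : Fin k ⊕ Fin (n - k) ≃ Fin n :=
  finSumFinEquiv.trans (finCongr (Nat.add_sub_cancel' hkn))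

lemma sumEquiv_inl_val (hkn : k ≤ n) (a : Fin k) :
    ((sumEquiv hkn (Sum.inl a) : Fin n) : ℕ) = (a : ℕ) := by
  simp [sumEquiv]

lemma sumEquiv_inr_val (hkn : k ≤ n) (b : Fin (n - k)) :
    ((sumEquiv hkn (Sum.inr b) : Fin n) : ℕ) = k + (b : ℕ) := by
  simp [sumEquiv]

lemma permT_sumEquiv_inl (T : Finset (Fin n)) (hT : T.card = k) (a : Fin k) :
    permT T hT (sumEquiv (card_le T hT) (Sum.inl a)) = T.orderEmbOfFin hT a := by
  rw [permT_apply_lt T hT _ (by rw [sumEquiv_inl_val]; exact a.isLt)]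
  rw [Finset.orderEmbOfFin_eq_orderEmbOfFin_iff]
  simp [sumEquiv_inl_val]

lemma permT_sumEquiv_inr (T : Finset (Fin n)) (hT : T.card = k) (b : Fin (n - k)) :
    permT T hT (sumEquiv (card_le T hT) (Sum.inr b)) =
      Tᶜ.orderEmbOfFin (card_compl_eq T hT) b := by
  rw [permT_apply_ge T hT _ (by rw [sumEquiv_inr_val]; omega)]
  rw [Finset.orderEmbOfFin_eq_orderEmbOfFin_iff]
  simp [sumEquiv_inr_val]

/-- The parametrization of permutations of `Fin n` by a `k`-subset together with a pair of
permutations. -/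
noncomputable def phiT (T : Finset (Fin n)) (hT : T.card = k) :
    ({s : Finset (Fin n) // s.card = k} × Equiv.Perm (Fin k) × Equiv.Perm (Fin (n - k))) →
      Equiv.Perm (Fin n) := fun x =>
  permT x.1.1 x.1.2 *
    ((sumEquiv (card_le T hT)).permCongr (Equiv.sumCongr x.2.1 x.2.2)) * (permT T hT)⁻¹

lemma phiT_apply (T : Finset (Fin n)) (hT : T.card = k)
    (S : {s : Finset (Fin n) // s.card = k}) (α : Equiv.Perm (Fin k))
    (β : Equiv.Perm (Fin (n - k))) (z : Fin k ⊕ Fin (n - k)) :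
    phiT T hT (S, α, β) (permT T hT (sumEquiv (card_le T hT) z)) =
      permT S.1 S.2 (sumEquiv (card_le T hT) (Equiv.sumCongr α β z)) := by
  simp only [phiT, Equiv.Perm.mul_apply, Equiv.Perm.inv_def,
    Equiv.permCongr_apply, Equiv.symm_apply_apply]

lemma card_le' (S : {s : Finset (Fin n) // s.card = k}) : k ≤ n := card_le S.1 S.2

lemma phiT_injective (T : Finset (Fin n)) (hT : T.card = k) :
    Function.Injective (phiT T hT) := by
  rintro ⟨S₁, α₁, β₁⟩ ⟨S₂, α₂, β₂⟩ h
  have h1 : ∀ a : Fin k, S₁.1.orderEmbOfFin S₁.2 (α₁ a) = S₂.1.orderEmbOfFin S₂.2 (α₂ a) := by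
    intro a
    have := congrArg (fun σ => σ (permT T hT (sumEquiv (card_le T hT) (Sum.inl a)))) h
    simpa only [phiT_apply, Equiv.sumCongr_apply, Sum.map_inl, permT_sumEquiv_inl S₁.1 S₁.2,
      permT_sumEquiv_inl S₂.1 S₂.2] using this
  have h2 : ∀ b : Fin (n - k),
      S₁.1ᶜ.orderEmbOfFin (card_compl_eq S₁.1 S₁.2) (β₁ b)
        = S₂.1ᶜ.orderEmbOfFin (card_compl_eq S₂.1 S₂.2) (β₂ b) := by
    intro b
    have := congrArg (fun σ => σ (permT T hT (sumEquiv (card_le T hT) (Sum.inr b)))) h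
    simpa only [phiT_apply, Equiv.sumCongr_apply, Sum.map_inr, permT_sumEquiv_inr S₁.1 S₁.2,
      permT_sumEquiv_inr S₂.1 S₂.2] using this
  have hS : S₁ = S₂ := by
    apply Subtype.ext
    apply Finset.eq_of_subset_of_card_le
    · intro y hy
      obtain ⟨a, rfl⟩ := (mem_iff_exists S₁.1 S₁.2 y).1 hy
      rw [show a = α₁ (α₁⁻¹ a) by simp, h1]
      exact Finset.orderEmbOfFin_mem _ _ _
    · rw [S₁.2, S₂.2]
  subst hS
  have hα : α₁ = α₂ := by
    apply Equiv.ext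
    intro a
    exact (S₁.1.orderEmbOfFin S₁.2).injective (h1 a)
  have hβ : β₁ = β₂ := by
    apply Equiv.ext
    intro b
    exact (S₁.1ᶜ.orderEmbOfFin (card_compl_eq S₁.1 S₁.2)).injective (h2 b)
  rw [hα, hβ]

lemma phiT_bijective (T : Finset (Fin n)) (hT : T.card = k) :
    Function.Bijective (phiT T hT) := by
  rw [Fintype.bijective_iff_injective_and_card]
  refine ⟨phiT_injective T hT, ?_⟩
  rw [Fintype.card_prod, Fintype.card_prod, Fintype.card_perm, Fintype.card_perm,
    Fintype.card_fin, Fintype.card_fin, Fintype.card_perm, Fintype.card_fin,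
    Fintype.card_finset_len, Fintype.card_fin]
  rw [← Nat.choose_mul_factorial_mul_factorial (card_le T hT)]
  ring

lemma neg_one_pow_parity {p q : ℕ} (h : p % 2 = q % 2) : ((-1 : ℤˣ)) ^ p = (-1) ^ q := by
  rcases Nat.even_or_odd p with he | ho
  · rw [Even.neg_one_pow he, Even.neg_one_pow (Nat.even_iff.mpr (by
      have := Nat.even_iff.mp he; omega))]
  · rw [Odd.neg_one_pow ho, Odd.neg_one_pow (Nat.odd_iff.mpr (by
      have := Nat.odd_iff.mp ho; omega))]

lemma sign_phiT (T : Finset (Fin n)) (hT : T.card = k)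
    (S : {s : Finset (Fin n) // s.card = k}) (α : Equiv.Perm (Fin k))
    (β : Equiv.Perm (Fin (n - k))) :
    Equiv.Perm.sign (phiT T hT (S, α, β)) =
      (-1) ^ ((∑ i ∈ S.1, (i : ℕ)) + (∑ i ∈ T, (i : ℕ)))
        * (Equiv.Perm.sign α * Equiv.Perm.sign β) := by
  simp only [phiT]
  rw [_root_.map_mul, _root_.map_mul, Equiv.Perm.sign_inv, Equiv.Perm.sign_permCongr,
    Equiv.Perm.sign_sumCongr, sign_permT, sign_permT]
  rw [mul_right_comm, ← pow_add]
  congr 1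
  exact neg_one_pow_parity (by omega)

variable {K : Type*} [CommRing K]

/-- Generalized Laplace expansion along the set of columns `T`. -/
lemma laplace_col (M : Matrix (Fin n) (Fin n) K) (T : Finset (Fin n)) (hT : T.card = k) :
    M.det = ∑ S : {s : Finset (Fin n) // s.card = k},
      ((-1 : K) ^ ((∑ i ∈ S.1, (i : ℕ)) + (∑ i ∈ T, (i : ℕ)))) *
        (M.submatrix (S.1.orderEmbOfFin S.2) (T.orderEmbOfFin hT)).det *
        (M.submatrix ((S.1ᶜ).orderEmbOfFin (card_compl_eq S.1 S.2))
          ((Tᶜ).orderEmbOfFin (card_compl_eq T hT))).det := by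
  rw [Matrix.det_apply']
  rw [← Fintype.sum_bijective (phiT T hT) (phiT_bijective T hT)
    (fun x => ((Equiv.Perm.sign (phiT T hT x) : ℤ) : K) * ∏ i, M (phiT T hT x i) i)
    (fun σ => ((Equiv.Perm.sign σ : ℤ) : K) * ∏ i, M (σ i) i) (fun x => rfl)]
  rw [Fintype.sum_prod_type]
  refine Finset.sum_congr rfl (fun S _ => ?_)
  rw [Fintype.sum_prod_type]
  rw [Matrix.det_apply' (M.submatrix (S.1.orderEmbOfFin S.2) (T.orderEmbOfFin hT)),
    Matrix.det_apply' (M.submatrix ((S.1ᶜ).orderEmbOfFin (card_compl_eq S.1 S.2))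
      ((Tᶜ).orderEmbOfFin (card_compl_eq T hT)))]
  simp only [Finset.mul_sum, Finset.sum_mul]
  conv_rhs => rw [Finset.sum_comm]
  refine Finset.sum_congr rfl (fun α _ => ?_)
  refine Finset.sum_congr rfl (fun β _ => ?_)
  have hprod : (∏ i, M (phiT T hT (S, α, β) i) i)
      = (∏ a, M (S.1.orderEmbOfFin S.2 (α a)) (T.orderEmbOfFin hT a))
        * ∏ b, M ((S.1ᶜ).orderEmbOfFin (card_compl_eq S.1 S.2) (β b))
            ((Tᶜ).orderEmbOfFin (card_compl_eq T hT) b) := by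
    rw [← Equiv.prod_comp ((sumEquiv (card_le T hT)).trans (permT T hT))
      (fun i => M (phiT T hT (S, α, β) i) i)]
    rw [Fintype.prod_sum_type]
    congr 1
    · refine Finset.prod_congr rfl (fun a _ => ?_)
      simp only [Equiv.trans_apply]
      rw [phiT_apply, Equiv.sumCongr_apply, Sum.map_inl, permT_sumEquiv_inl S.1 S.2,
        permT_sumEquiv_inl T hT]
    · refine Finset.prod_congr rfl (fun b _ => ?_)
      simp only [Equiv.trans_apply]
      rw [phiT_apply, Equiv.sumCongr_apply, Sum.map_inr, permT_sumEquiv_inr S.1 S.2,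
        permT_sumEquiv_inr T hT]
  have hsign : ((Equiv.Perm.sign (phiT T hT (S, α, β)) : ℤ) : K)
      = (-1 : K) ^ ((∑ i ∈ S.1, (i : ℕ)) + (∑ i ∈ T, (i : ℕ)))
        * (((Equiv.Perm.sign α : ℤ) : K) * ((Equiv.Perm.sign β : ℤ) : K)) := by
    rw [sign_phiT T hT S α β]
    push_cast
    ring
  rw [hprod, hsign]
  simp only [Matrix.submatrix_apply]
  ring

end DetAddAux
end Part3


/-- For arbitrary `n × n` matrices `A, B` over `K` (`K = ℝ` or `ℂ`),
`det (A + B) = ∑_{k=0}^{n} tr (adj_k A ⬝ C_k B)`. -/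
theorem det_add_eq_sum_trace_adjCompound_mul_compound
    {K : Type*} [RCLike K] {n : ℕ} (A B : Matrix (Fin n) (Fin n) K) :
    (A + B).det =
      ∑ k ∈ Finset.range (n + 1), Matrix.trace (adjCompound k A * compound k B) := by
  classical
  have h0 : (A + B).det
      = ∑ s : Finset (Fin n), Matrix.det (s.piecewise A B) :=
    Matrix.detRowAlternating.toMultilinearMap.map_add_univ A B
  rw [h0]
  rw [show (∑ s : Finset (Fin n), Matrix.det (s.piecewise A B))
      = ∑ t : Finset (Fin n), Matrix.det ((tᶜ).piecewise A B) from
    Fintype.sum_bijective (fun s : Finset (Fin n) => sᶜ)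
      (Function.Involutive.bijective (fun s => compl_compl s)) _ _
      (fun s => by rw [compl_compl])]
  rw [← Finset.sum_fiberwise_of_maps_to (g := Finset.card) (t := Finset.range (n+1))
    (fun t _ => Finset.mem_range.mpr (by
      have := DetAddAux.card_le t rfl
      omega)) (fun t => Matrix.det ((tᶜ).piecewise A B))]
  refine Finset.sum_congr rfl (fun k _ => ?_)
  rw [Finset.sum_subtype (p := fun t : Finset (Fin n) => t.card = k)
    (Finset.univ.filter (fun t : Finset (Fin n) => t.card = k))
    (by intro x; simp) (fun t => Matrix.det ((tᶜ).piecewise A B))]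
  have htr : Matrix.trace (adjCompound k A * compound k B)
      = ∑ T : {s : Finset (Fin n) // s.card = k}, ∑ S : {s : Finset (Fin n) // s.card = k},
          adjCompound k A S T * compound k B T S := by
    simp only [Matrix.trace, Matrix.diag, Matrix.mul_apply]
    rw [Finset.sum_comm]
  rw [htr]
  refine Finset.sum_congr rfl (fun T _ => ?_)
  set M : Matrix (Fin n) (Fin n) K := Matrix.of ((T.1ᶜ).piecewise A B) with hMdef
  have hlap := DetAddAux.laplace_col (Mᵀ) T.1 T.2
  show M.det = _
  rw [← Matrix.det_transpose M, hlap]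
  refine Finset.sum_congr rfl (fun S _ => ?_)
  have hB : M.submatrix (T.1.orderEmbOfFin T.2) (S.1.orderEmbOfFin S.2)
      = B.submatrix (T.1.orderEmbOfFin T.2) (S.1.orderEmbOfFin S.2) := by
    ext a c
    simp only [Matrix.submatrix_apply, hMdef, Matrix.of_apply]
    have hmem : T.1.orderEmbOfFin T.2 a ∉ T.1ᶜ := by
      simp only [Finset.mem_compl, not_not]
      exact Finset.orderEmbOfFin_mem _ _ _
    exact congrFun (Finset.piecewise_eq_of_notMem _ _ _ hmem) _
  have hA : M.submatrix ((T.1ᶜ).orderEmbOfFin (DetAddAux.card_compl_eq T.1 T.2))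
        ((S.1ᶜ).orderEmbOfFin (DetAddAux.card_compl_eq S.1 S.2))
      = A.submatrix ((T.1ᶜ).orderEmbOfFin (DetAddAux.card_compl_eq T.1 T.2))
        ((S.1ᶜ).orderEmbOfFin (DetAddAux.card_compl_eq S.1 S.2)) := by
    ext a c
    simp only [Matrix.submatrix_apply, hMdef, Matrix.of_apply]
    exact congrFun (Finset.piecewise_eq_of_mem _ _ _ (Finset.orderEmbOfFin_mem _ _ _)) _
  have e1 : (Mᵀ.submatrix (S.1.orderEmbOfFin S.2) (T.1.orderEmbOfFin T.2)).det
      = (B.submatrix (T.1.orderEmbOfFin T.2) (S.1.orderEmbOfFin S.2)).det := by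
    rw [show Mᵀ.submatrix (S.1.orderEmbOfFin S.2) (T.1.orderEmbOfFin T.2)
        = (M.submatrix (T.1.orderEmbOfFin T.2) (S.1.orderEmbOfFin S.2))ᵀ from rfl,
      Matrix.det_transpose, hB]
  have e2 : (Mᵀ.submatrix ((S.1ᶜ).orderEmbOfFin (DetAddAux.card_compl_eq S.1 S.2))
        ((T.1ᶜ).orderEmbOfFin (DetAddAux.card_compl_eq T.1 T.2))).det
      = (A.submatrix ((T.1ᶜ).orderEmbOfFin (DetAddAux.card_compl_eq T.1 T.2))
        ((S.1ᶜ).orderEmbOfFin (DetAddAux.card_compl_eq S.1 S.2))).det := by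
    rw [show Mᵀ.submatrix ((S.1ᶜ).orderEmbOfFin (DetAddAux.card_compl_eq S.1 S.2))
          ((T.1ᶜ).orderEmbOfFin (DetAddAux.card_compl_eq T.1 T.2))
        = (M.submatrix ((T.1ᶜ).orderEmbOfFin (DetAddAux.card_compl_eq T.1 T.2))
          ((S.1ᶜ).orderEmbOfFin (DetAddAux.card_compl_eq S.1 S.2)))ᵀ from rfl,
      Matrix.det_transpose, hA]
  rw [e1, e2]
  show (-1 : K) ^ ((∑ i ∈ S.1, (i : ℕ)) + (∑ i ∈ T.1, (i : ℕ)))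
      * (B.submatrix (T.1.orderEmbOfFin T.2) (S.1.orderEmbOfFin S.2)).det
      * (A.submatrix ((T.1ᶜ).orderEmbOfFin (DetAddAux.card_compl_eq T.1 T.2))
        ((S.1ᶜ).orderEmbOfFin (DetAddAux.card_compl_eq S.1 S.2))).det
      = adjCompound k A S T * compound k B T S
  rw [mul_right_comm]
  rfl


end DetAddProof
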